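/- arXiv:2202.00639 — 2 statements merged into one kernel-verified Lean document; each statement's English description precedes it below -/
import Mathlib

section
/- Let n, m be coprime integers with 1 < n ≤ m. Then M ∈ M(n,m) is extremal if and only if |supp M| = n + m - 1. -/
open Finset

def DS (n m : ℕ) (A : Matrix (Fin n) (Fin m) ℝ) : Prop :=
  (∀ i j, 0 ≤ A i j) ∧ (∀ j, ∑ i, A i j = (n : ℝ)) ∧ (∀ i, ∑ j, A i j = (m : ℝ))

noncomputable def supp {n m : ℕ} (A : Matrix (Fin n) (Fin m) ℝ) : Finset (Fin n × Fin m) :=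
  Finset.univ.filter fun p => A p.1 p.2 ≠ 0

noncomputable def S (n m : ℕ) : ℕ :=
  sInf {k | ∃ A : Matrix (Fin n) (Fin m) ℝ, DS n m A ∧ (supp A).card = k}

def IsExtremal {n m : ℕ} (M : Matrix (Fin n) (Fin m) ℝ) : Prop :=
  DS n m M ∧ ∀ (A B : Matrix (Fin n) (Fin m) ℝ) (t : ℝ), DS n m A → DS n m B →
    0 < t → t < 1 → M = t • A + (1 - t) • B → A = M ∧ B = M

/-! ### Auxiliary lemmas -/

lemma mem_supp_iff {n m : ℕ} (M : Matrix (Fin n) (Fin m) ℝ) (p : Fin n × Fin m) :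
    p ∈ supp M ↔ M p.1 p.2 ≠ 0 := by
  simp [supp]

/-- Connectivity lemma: if `u i + v j = 0` on the support of a matrix in `DS n m`
with `n, m` coprime, then `u` and `v` are constant. -/
lemma lemC {n m : ℕ} (hn : 0 < n) (hco : Nat.Coprime n m)
    (M : Matrix (Fin n) (Fin m) ℝ) (hM : DS n m M)
    (u : Fin n → ℝ) (v : Fin m → ℝ)
    (h : ∀ i j, M i j ≠ 0 → u i + v j = 0) :
    ∃ a : ℝ, (∀ i, u i = a) ∧ (∀ j, v j = -a) := by
  obtain ⟨hpos, hcol, hrow⟩ := hM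
  set i0 : Fin n := ⟨0, hn⟩
  set a := u i0 with ha
  set I : Finset (Fin n) := univ.filter (fun i => u i = a) with hI
  set J : Finset (Fin m) := univ.filter (fun j => v j = -a) with hJ
  have key1 : ∀ i ∈ I, ∑ j ∈ J, M i j = (m : ℝ) := by
    intro i hi
    rw [← hrow i]
    apply Finset.sum_subset (Finset.subset_univ J)
    intro j _ hj
    by_contra hne
    apply hj
    simp only [hJ, mem_filter, mem_univ, true_and]
    have hui : u i = a := by simpa [hI] using hi
    have := h i j hne
    linarith
  have key2 : ∀ j ∈ J, ∑ i ∈ I, M i j = (n : ℝ) := by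
    intro j hj
    rw [← hcol j]
    apply Finset.sum_subset (Finset.subset_univ I)
    intro i _ hi
    by_contra hne
    apply hi
    simp only [hI, mem_filter, mem_univ, true_and]
    have hvj : v j = -a := by simpa [hJ] using hj
    have := h i j hne
    linarith
  have hsum : (I.card : ℝ) * m = (J.card : ℝ) * n := by
    have e1 : ∑ i ∈ I, ∑ j ∈ J, M i j = (I.card : ℝ) * m := by
      rw [Finset.sum_congr rfl key1, Finset.sum_const, nsmul_eq_mul]
    have e2 : ∑ i ∈ I, ∑ j ∈ J, M i j = (J.card : ℝ) * n := by
      rw [show ∑ i ∈ I, ∑ j ∈ J, M i j = ∑ j ∈ J, ∑ i ∈ I, M i j from Finset.sum_comm, Finset.sum_congr rfl key2, Finset.sum_const, nsmul_eq_mul]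
    rw [← e1, e2]
  have hnat : I.card * m = J.card * n := by exact_mod_cast hsum
  have hdvd : n ∣ I.card :=
    Nat.Coprime.dvd_of_dvd_mul_right hco ⟨J.card, by rw [hnat, Nat.mul_comm]⟩
  have hIle : I.card ≤ n := by
    simpa using Finset.card_filter_le (univ : Finset (Fin n)) _
  have hIpos : 0 < I.card := Finset.card_pos.mpr ⟨i0, by simp [hI, ha]⟩
  have hIeq : I.card = n := le_antisymm hIle (Nat.le_of_dvd hIpos hdvd)
  have hIuniv : I = univ := Finset.eq_univ_of_card _ (by simpa using hIeq)
  have hu : ∀ i, u i = a := by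
    intro i
    have : i ∈ I := hIuniv ▸ Finset.mem_univ i
    simpa [hI] using this
  have hJeq : J.card = m := by
    have : m * n = J.card * n := by rw [← hnat, hIeq]; ring
    exact Nat.eq_of_mul_eq_mul_right hn this.symm
  have hJuniv : J = univ := Finset.eq_univ_of_card _ (by simpa using hJeq)
  refine ⟨a, hu, fun j => ?_⟩
  have : j ∈ J := hJuniv ▸ Finset.mem_univ j
  simpa [hJ] using this

/-- Incidence matrix of a set of positions, rows indexed by rows+columns, columns by positions. -/
noncomputable def inc {n m : ℕ} (T : Finset (Fin n × Fin m)) :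
    Matrix (Fin n ⊕ Fin m) {p // p ∈ T} ℝ :=
  fun v e => Sum.elim (fun i => if e.val.1 = i then (1:ℝ) else 0)
                      (fun j => if e.val.2 = j then (1:ℝ) else 0) v

lemma inc_mulVec_inl {n m : ℕ} (T : Finset (Fin n × Fin m))
    (D : Matrix (Fin n) (Fin m) ℝ) (hD : ∀ p : Fin n × Fin m, p ∉ T → D p.1 p.2 = 0)
    (i : Fin n) :
    (inc T).mulVec (fun e => D e.val.1 e.val.2) (Sum.inl i) = ∑ j, D i j := by
  have : (inc T).mulVec (fun e => D e.val.1 e.val.2) (Sum.inl i)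
      = ∑ e : {p // p ∈ T}, if e.val.1 = i then D e.val.1 e.val.2 else 0 := by
    simp [Matrix.mulVec, dotProduct, inc, ite_mul]
  rw [this, Finset.sum_coe_sort T (fun p => if p.1 = i then D p.1 p.2 else 0)]
  rw [Finset.sum_subset (Finset.subset_univ T)
      (by intro p _ hp; simp [hD p hp])]
  rw [Fintype.sum_prod_type]
  rw [Finset.sum_comm]
  simp [Finset.sum_ite_eq']

lemma inc_mulVec_inr {n m : ℕ} (T : Finset (Fin n × Fin m))
    (D : Matrix (Fin n) (Fin m) ℝ) (hD : ∀ p : Fin n × Fin m, p ∉ T → D p.1 p.2 = 0)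
    (j : Fin m) :
    (inc T).mulVec (fun e => D e.val.1 e.val.2) (Sum.inr j) = ∑ i, D i j := by
  have : (inc T).mulVec (fun e => D e.val.1 e.val.2) (Sum.inr j)
      = ∑ e : {p // p ∈ T}, if e.val.2 = j then D e.val.1 e.val.2 else 0 := by
    simp [Matrix.mulVec, dotProduct, inc, ite_mul]
  rw [this, Finset.sum_coe_sort T (fun p => if p.2 = j then D p.1 p.2 else 0)]
  rw [Finset.sum_subset (Finset.subset_univ T)
      (by intro p _ hp; simp [hD p hp])]
  rw [Fintype.sum_prod_type]
  simp [Finset.sum_ite_eq']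

lemma inc_transpose_mulVec {n m : ℕ} (T : Finset (Fin n × Fin m))
    (w : Fin n ⊕ Fin m → ℝ) (e : {p // p ∈ T}) :
    (inc T).transpose.mulVec w e = w (Sum.inl e.val.1) + w (Sum.inr e.val.2) := by
  simp [Matrix.mulVec, dotProduct, inc, Matrix.transpose_apply, Fintype.sum_sum_type,
    ite_mul, Finset.sum_ite_eq]

lemma rank_inc {n m : ℕ} (hn : 0 < n) (hco : Nat.Coprime n m)
    (M : Matrix (Fin n) (Fin m) ℝ) (hM : DS n m M) :
    (inc (supp M)).rank = n + m - 1 := by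
  rw [← Matrix.rank_transpose]
  set w0 : Fin n ⊕ Fin m → ℝ := Sum.elim (fun _ => (1:ℝ)) (fun _ => -1) with hw0
  have hker : LinearMap.ker (inc (supp M)).transpose.mulVecLin = Submodule.span ℝ {w0} := by
    apply le_antisymm
    · intro w hw
      have hw' : ∀ e : {p // p ∈ supp M}, w (Sum.inl e.val.1) + w (Sum.inr e.val.2) = 0 := by
        intro e
        have := congrFun (LinearMap.mem_ker.mp hw) e
        rw [Matrix.mulVecLin_apply, inc_transpose_mulVec] at this
        exact this
      obtain ⟨a, hu, hv⟩ := lemC hn hco M hM (fun i => w (Sum.inl i)) (fun j => w (Sum.inr j))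
        (by intro i j hne
            exact hw' ⟨(i, j), by simp [supp, hne]⟩)
      rw [Submodule.mem_span_singleton]
      refine ⟨a, ?_⟩
      funext x
      cases x with
      | inl i => simp [hw0, hu i]
      | inr j => simp [hw0, hv j]
    · rw [Submodule.span_le, Set.singleton_subset_iff]
      apply LinearMap.mem_ker.mpr
      funext e
      rw [Matrix.mulVecLin_apply, inc_transpose_mulVec]
      simp [hw0]
  have hw0ne : w0 ≠ 0 := by
    intro h
    have := congrFun h (Sum.inl ⟨0, hn⟩)
    simp [hw0] at this
  have hker1 : Module.finrank ℝ (LinearMap.ker (inc (supp M)).transpose.mulVecLin) = 1 := by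
    rw [hker]; exact finrank_span_singleton hw0ne
  have hrn := LinearMap.finrank_range_add_finrank_ker (inc (supp M)).transpose.mulVecLin
  have hdom : Module.finrank ℝ (Fin n ⊕ Fin m → ℝ) = n + m := by
    simp [Module.finrank_pi]
  rw [hker1, hdom] at hrn
  have : (inc (supp M)).transpose.rank
      = Module.finrank ℝ (LinearMap.range (inc (supp M)).transpose.mulVecLin) := rfl
  omega

set_option maxHeartbeats 1600000 in
theorem stmt9 (n m : ℕ) (hn : 1 < n) (hnm : n ≤ m) (hco : Nat.Coprime n m)
    (M : Matrix (Fin n) (Fin m) ℝ) (hM : DS n m M) :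
    IsExtremal M ↔ (supp M).card = n + m - 1 := by
  have hn0 : 0 < n := by omega
  have hm0 : 0 < m := by omega
  obtain ⟨hMpos, hMcol, hMrow⟩ := hM
  have hrank : (inc (supp M)).rank = n + m - 1 := rank_inc hn0 hco M ⟨hMpos, hMcol, hMrow⟩
  -- rank–nullity on the incidence matrix itself
  have hrn := LinearMap.finrank_range_add_finrank_ker (inc (supp M)).mulVecLin
  have hdom : Module.finrank ℝ ({p // p ∈ supp M} → ℝ) = (supp M).card := by
    simp [Module.finrank_pi]
  have hrdef : (inc (supp M)).rank
      = Module.finrank ℝ (LinearMap.range (inc (supp M)).mulVecLin) := rfl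
  rw [hdom] at hrn
  have hlow : n + m - 1 ≤ (supp M).card := by
    have := Matrix.rank_le_card_width (inc (supp M))
    rw [hrank, Fintype.card_coe] at this
    exact this
  constructor
  · -- extremal → card = n+m-1
    intro hext
    by_contra hne
    have hbig : n + m - 1 < (supp M).card := lt_of_le_of_ne hlow (Ne.symm hne)
    have hkerpos : 0 < Module.finrank ℝ (LinearMap.ker (inc (supp M)).mulVecLin) := by omega
    have hkerne : LinearMap.ker (inc (supp M)).mulVecLin ≠ ⊥ := by
      intro h
      rw [h] at hkerpos
      simp [finrank_bot] at hkerpos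
    obtain ⟨x, hxker, hxne⟩ := Submodule.exists_mem_ne_zero_of_ne_bot hkerne
    set D : Matrix (Fin n) (Fin m) ℝ :=
      fun i j => if h : (i, j) ∈ supp M then x ⟨(i, j), h⟩ else 0 with hD
    have hDs : ∀ p : Fin n × Fin m, p ∉ supp M → D p.1 p.2 = 0 := by
      intro p hp
      simp only [hD]
      rw [dif_neg (by simpa using hp)]
    have hxeq : (fun e : {p // p ∈ supp M} => D e.val.1 e.val.2) = x := by
      funext e
      obtain ⟨⟨i, j⟩, hp⟩ := e
      simp only [hD]
      rw [dif_pos hp]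
    have hDrow : ∀ i, ∑ j, D i j = 0 := by
      intro i
      rw [← inc_mulVec_inl (supp M) D hDs i, hxeq]
      have := congrFun (LinearMap.mem_ker.mp hxker) (Sum.inl i)
      rw [Matrix.mulVecLin_apply] at this
      exact this
    have hDcol : ∀ j, ∑ i, D i j = 0 := by
      intro j
      rw [← inc_mulVec_inr (supp M) D hDs j, hxeq]
      have := congrFun (LinearMap.mem_ker.mp hxker) (Sum.inr j)
      rw [Matrix.mulVecLin_apply] at this
      exact this
    have hDne : ∃ p : Fin n × Fin m, D p.1 p.2 ≠ 0 := by
      obtain ⟨e, he⟩ := Function.ne_iff.mp hxne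
      exact ⟨e.val, by rw [congrFun hxeq e]; simpa using he⟩
    -- support of M is nonempty
    have hSne : (supp M).Nonempty := by
      by_contra h
      rw [Finset.not_nonempty_iff_eq_empty] at h
      have : ∑ j, M ⟨0, hn0⟩ j = 0 := by
        apply Finset.sum_eq_zero
        intro j _
        by_contra hz
        have : (⟨0, hn0⟩, j) ∈ supp M := by simp [supp, hz]
        simp [h] at this
      rw [hMrow ⟨0, hn0⟩] at this
      exact absurd this (by positivity)
    set δ : ℝ := (supp M).inf' hSne (fun p => M p.1 p.2) with hδ
    have hδpos : 0 < δ := by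
      rw [hδ, Finset.lt_inf'_iff]
      intro p hp
      exact lt_of_le_of_ne (hMpos p.1 p.2) (Ne.symm ((mem_supp_iff M p).mp hp))
    set c : ℝ := (supp M).sup' hSne (fun p => |D p.1 p.2|) with hc
    have hc0 : 0 ≤ c := by
      obtain ⟨p0, hp0⟩ := hSne
      exact le_trans (abs_nonneg (D p0.1 p0.2)) (Finset.le_sup' (fun q => |D q.1 q.2|) hp0)
    set ε : ℝ := δ / (c + 1) with hε
    have hεpos : 0 < ε := div_pos hδpos (by linarith)
    have hbound : ∀ p : Fin n × Fin m, p ∈ supp M → ε * |D p.1 p.2| ≤ M p.1 p.2 := by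
      intro p hp
      have h1 : |D p.1 p.2| ≤ c := Finset.le_sup' (fun q => |D q.1 q.2|) hp
      have h2 : δ ≤ M p.1 p.2 := Finset.inf'_le _ hp
      have h3 : ε * |D p.1 p.2| ≤ ε * c := by
        apply mul_le_mul_of_nonneg_left h1 (le_of_lt hεpos)
      have h4 : ε * c ≤ δ := by
        rw [hε, div_mul_eq_mul_div, div_le_iff₀ (by linarith)]
        nlinarith
      linarith
    have habs : ∀ i j, ε * |D i j| ≤ M i j := by
      intro i j
      by_cases hp : (i, j) ∈ supp M
      · exact hbound (i, j) hp
      · have h1 : D i j = 0 := hDs (i, j) hp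
        have h2 : M i j = 0 := by
          by_contra hz
          exact hp (by simp [supp, hz])
        simp [h1, h2]
    set A : Matrix (Fin n) (Fin m) ℝ := M + ε • D with hA
    set B : Matrix (Fin n) (Fin m) ℝ := M - ε • D with hB
    have hDSA : DS n m A := by
      refine ⟨?_, ?_, ?_⟩
      · intro i j
        have h1 := habs i j
        have h2 : -(ε * |D i j|) ≤ ε * D i j := by
          rw [← mul_neg]
          exact mul_le_mul_of_nonneg_left (neg_abs_le _) (le_of_lt hεpos)
        simp only [hA, Matrix.add_apply, Matrix.smul_apply, smul_eq_mul]
        linarith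
      · intro j
        simp only [hA, Matrix.add_apply, Matrix.smul_apply, smul_eq_mul]
        rw [Finset.sum_add_distrib, ← Finset.mul_sum, hDcol j, hMcol j]
        ring
      · intro i
        simp only [hA, Matrix.add_apply, Matrix.smul_apply, smul_eq_mul]
        rw [Finset.sum_add_distrib, ← Finset.mul_sum, hDrow i, hMrow i]
        ring
    have hDSB : DS n m B := by
      refine ⟨?_, ?_, ?_⟩
      · intro i j
        have h1 := habs i j
        have h2 : ε * D i j ≤ ε * |D i j| :=
          mul_le_mul_of_nonneg_left (le_abs_self _) (le_of_lt hεpos)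
        simp only [hB, Matrix.sub_apply, Matrix.smul_apply, smul_eq_mul]
        linarith
      · intro j
        simp only [hB, Matrix.sub_apply, Matrix.smul_apply, smul_eq_mul]
        rw [Finset.sum_sub_distrib, ← Finset.mul_sum, hDcol j, hMcol j]
        ring
      · intro i
        simp only [hB, Matrix.sub_apply, Matrix.smul_apply, smul_eq_mul]
        rw [Finset.sum_sub_distrib, ← Finset.mul_sum, hDrow i, hMrow i]
        ring
    have heq : M = (1/2 : ℝ) • A + (1 - 1/2 : ℝ) • B := by
      ext i j
      simp only [hA, hB, Matrix.add_apply, Matrix.sub_apply, Matrix.smul_apply, smul_eq_mul]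
      ring
    obtain ⟨hAM, _⟩ := hext.2 A B (1/2) hDSA hDSB (by norm_num) (by norm_num) heq
    obtain ⟨p, hp⟩ := hDne
    have : A p.1 p.2 = M p.1 p.2 := by rw [hAM]
    simp only [hA, Matrix.add_apply, Matrix.smul_apply, smul_eq_mul] at this
    have : ε * D p.1 p.2 = 0 := by linarith
    rcases mul_eq_zero.mp this with h | h
    · exact absurd h (ne_of_gt hεpos)
    · exact hp h
  · -- card = n+m-1 → extremal
    intro hcard
    have hker0 : Module.finrank ℝ (LinearMap.ker (inc (supp M)).mulVecLin) = 0 := by omega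
    have hkerbot : LinearMap.ker (inc (supp M)).mulVecLin = ⊥ :=
      Submodule.finrank_eq_zero.mp hker0
    have Vtriv : ∀ D : Matrix (Fin n) (Fin m) ℝ,
        (∀ i j, M i j = 0 → D i j = 0) → (∀ i, ∑ j, D i j = 0) → (∀ j, ∑ i, D i j = 0) →
        D = 0 := by
      intro D hsupp hrow hcol
      have hDs : ∀ p : Fin n × Fin m, p ∉ supp M → D p.1 p.2 = 0 := by
        intro p hp
        apply hsupp
        by_contra hz
        exact hp ((mem_supp_iff M p).mpr hz)
      set x : {p // p ∈ supp M} → ℝ := fun e => D e.val.1 e.val.2 with hx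
      have hxker : x ∈ LinearMap.ker (inc (supp M)).mulVecLin := by
        apply LinearMap.mem_ker.mpr
        funext v
        rw [Matrix.mulVecLin_apply]
        cases v with
        | inl i => rw [hx, inc_mulVec_inl (supp M) D hDs i]; exact hrow i
        | inr j => rw [hx, inc_mulVec_inr (supp M) D hDs j]; exact hcol j
      rw [hkerbot, Submodule.mem_bot] at hxker
      ext i j
      by_cases hp : (i, j) ∈ supp M
      · have := congrFun hxker ⟨(i, j), hp⟩
        simpa [hx] using this
      · simpa using hDs (i, j) hp
    refine ⟨⟨hMpos, hMcol, hMrow⟩, ?_⟩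
    intro A B t hDSA hDSB ht ht1 heq
    have hAB : A = B := by
      have hD := Vtriv (A - B) ?_ ?_ ?_
      · ext i j
        have := congrFun (congrFun hD i) j
        simp only [Matrix.sub_apply, Matrix.zero_apply] at this
        linarith
      · intro i j hz
        have h1 := congrFun (congrFun heq i) j
        simp only [Matrix.add_apply, Matrix.smul_apply, smul_eq_mul] at h1
        rw [hz] at h1
        have hA0 : 0 ≤ A i j := hDSA.1 i j
        have hB0 : 0 ≤ B i j := hDSB.1 i j
        have hAz : A i j = 0 := by nlinarith
        have hBz : B i j = 0 := by nlinarith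
        simp [Matrix.sub_apply, hAz, hBz]
      · intro i
        simp only [Matrix.sub_apply]
        rw [Finset.sum_sub_distrib, hDSA.2.2 i, hDSB.2.2 i]
        ring
      · intro j
        simp only [Matrix.sub_apply]
        rw [Finset.sum_sub_distrib, hDSA.2.1 j, hDSB.2.1 j]
        ring
    have hAM : A = M := by
      ext i j
      have h1 := congrFun (congrFun heq i) j
      rw [← hAB] at h1
      simp only [Matrix.add_apply, Matrix.smul_apply, smul_eq_mul] at h1
      rw [h1]; ring
    exact ⟨hAM, hAB ▸ hAM⟩
end

section
/- The two 4 × 5 matrices A with rows (1,4,0,0,0),(0,0,4,0,1),(3,0,0,2,0),(0,0,0,2,3) and B with rows (4,0,0,0,1),(0,4,0,0,1),(0,0,4,0,1),(0,0,0,4,1) both lie in M(4,5) and both have support of minimum cardinality S(4,5) = 8, yet A cannot be obtained from B by permuting rows and columns. -/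
open Finset

noncomputable def A : Matrix (Fin 4) (Fin 5) ℝ :=
  !![1,4,0,0,0; 0,0,4,0,1; 3,0,0,2,0; 0,0,0,2,3]

noncomputable def B : Matrix (Fin 4) (Fin 5) ℝ :=
  !![4,0,0,0,1; 0,4,0,0,1; 0,0,4,0,1; 0,0,0,4,1]

lemma row_two {M : Matrix (Fin 4) (Fin 5) ℝ} (h : DS 4 5 M) (i : Fin 4) :
    ∃ j1 j2 : Fin 5, j1 ≠ j2 ∧ M i j1 ≠ 0 ∧ M i j2 ≠ 0 := by
  obtain ⟨hpos, hcol, hrow⟩ := h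
  by_contra hc
  push_neg at hc
  have hex : ∃ j, M i j ≠ 0 := by
    by_contra hz
    push_neg at hz
    have h0 := hrow i
    simp [hz] at h0
  obtain ⟨j1, hj1⟩ := hex
  have hz : ∀ j, j ≠ j1 → M i j = 0 := fun j hj => hc j1 j (Ne.symm hj) hj1
  have hsum : ∑ j, M i j = M i j1 :=
    Finset.sum_eq_single j1 (fun j _ hj => hz j hj) (by simp)
  have h5 : M i j1 = 5 := by
    have := hrow i
    rw [hsum] at this
    norm_num at this
    exact this
  have hle : M i j1 ≤ ∑ i', M i' j1 :=
    Finset.single_le_sum (fun i' _ => hpos i' j1) (Finset.mem_univ i)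
  rw [hcol j1] at hle
  norm_num [h5] at hle

lemma lower {M : Matrix (Fin 4) (Fin 5) ℝ} (h : DS 4 5 M) : 8 ≤ (supp M).card := by
  have key : ∀ i : Fin 4, 2 ≤ ((supp M).filter (fun p => p.1 = i)).card := by
    intro i
    obtain ⟨j1, j2, hne, h1, h2⟩ := row_two h i
    refine Finset.one_lt_card.2 ⟨(i, j1), ?_, (i, j2), ?_, by simp [hne]⟩ <;>
      simp [supp, Finset.mem_filter, h1, h2]
  calc (8 : ℕ) = ∑ _i : Fin 4, 2 := by simp
    _ ≤ ∑ i : Fin 4, ((supp M).filter (fun p => p.1 = i)).card :=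
        Finset.sum_le_sum (fun i _ => key i)
    _ = (supp M).card :=
        (Finset.card_eq_sum_card_fiberwise (fun p _ => Finset.mem_univ p.1)).symm

lemma hDSA : DS 4 5 A := by
  refine ⟨?_, ?_, ?_⟩
  · intro i j; fin_cases i <;> fin_cases j <;> norm_num [A]
  · intro j; fin_cases j <;> simp [A, Fin.sum_univ_four, Matrix.vecHead, Matrix.vecTail] <;> norm_num
  · intro i; fin_cases i <;> simp [A, Fin.sum_univ_five, Matrix.vecHead, Matrix.vecTail] <;> norm_num

lemma hDSB : DS 4 5 B := by
  refine ⟨?_, ?_, ?_⟩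
  · intro i j; fin_cases i <;> fin_cases j <;> norm_num [B]
  · intro j; fin_cases j <;> simp [B, Fin.sum_univ_four, Matrix.vecHead, Matrix.vecTail] <;> norm_num
  · intro i; fin_cases i <;> simp [B, Fin.sum_univ_five, Matrix.vecHead, Matrix.vecTail] <;> norm_num

lemma hcardA : (supp A).card = 8 := by
  have : supp A = {((0:Fin 4),(0:Fin 5)),(0,1),(1,2),(1,4),(2,0),(2,3),(3,3),(3,4)} := by
    ext ⟨i, j⟩
    fin_cases i <;> fin_cases j <;> simp [supp, A, Matrix.vecHead, Matrix.vecTail] <;> first | decide | norm_num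
  rw [this]; decide

lemma hcardB : (supp B).card = 8 := by
  have : supp B = {((0:Fin 4),(0:Fin 5)),(0,4),(1,1),(1,4),(2,2),(2,4),(3,3),(3,4)} := by
    ext ⟨i, j⟩
    fin_cases i <;> fin_cases j <;> simp [supp, B, Matrix.vecHead, Matrix.vecTail] <;> first | decide | norm_num
  rw [this]; decide

theorem stmt16 : DS 4 5 A ∧ DS 4 5 B ∧ S 4 5 = 8 ∧
    (supp A).card = 8 ∧ (supp B).card = 8 ∧
    ¬ ∃ (σ : Equiv.Perm (Fin 4)) (τ : Equiv.Perm (Fin 5)),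
        ∀ i j, A i j = B (σ i) (τ j) := by
  refine ⟨hDSA, hDSB, ?_, hcardA, hcardB, ?_⟩
  · apply le_antisymm
    · exact Nat.sInf_le ⟨A, hDSA, hcardA⟩
    · exact le_csInf ⟨8, A, hDSA, hcardA⟩ (fun k ⟨M, hM, hk⟩ => hk ▸ lower hM)
  · rintro ⟨σ, τ, h⟩
    have h3 : B (σ 2) (τ 0) = 3 := by
      rw [← h 2 0]; norm_num [A]; simp [Matrix.cons_val]
    have hB3 : ∀ i j, B i j ≠ 3 := by
      intro i j; fin_cases i <;> fin_cases j <;> norm_num [B]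
    exact hB3 _ _ h3
end
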